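/- arXiv:1006.0543 — 6 statements merged into one kernel-verified Lean document; each statement's English description precedes it below -/
import Mathlib

section
/- If N is odd, then for ANY N distinct points z₁,…,z_N in ℂ there exists a nonzero strength vector Γ ∈ ℂ^N making the configuration a fixed equilibrium, i.e. ∑_{β≠α} Γ_β/(z_α − z_β) = 0 for every α = 1,…,N. -/
open Matrix BigOperators

/-- The configuration matrix of `N` points in the plane:
`A α α = 0`, `A α β = 1 / (z α - z β)` for `α ≠ β`. -/
noncomputable def configMatrix {N : ℕ} (z : Fin N → ℂ) : Matrix (Fin N) (Fin N) ℂ :=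
  Matrix.of fun α β => if α = β then 0 else 1 / (z α - z β)

lemma configMatrix_det_zero {N : ℕ} (hN : Odd N) (z : Fin N → ℂ) :
    (configMatrix z).det = 0 := by
  have ht : (configMatrix z)ᵀ = -(configMatrix z) := by
    ext α β
    simp only [configMatrix, transpose_apply, of_apply, Matrix.neg_apply]
    by_cases h : α = β
    · simp [h]
    · rw [if_neg (Ne.symm h), if_neg h, ← neg_sub (z α), div_neg]
  have := congrArg Matrix.det ht
  rw [Matrix.det_transpose, Matrix.det_neg, Fintype.card_fin,
    Odd.neg_one_pow hN, neg_one_mul] at this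
  have h2 : (2 : ℂ) * (configMatrix z).det = 0 := by linear_combination this
  simpa using h2

/-- For an odd number of distinct points there always exists a nonzero strength
vector making the configuration a fixed equilibrium. -/
theorem exists_equilibrium_of_odd
    {N : ℕ} (hN : Odd N) (z : Fin N → ℂ) (hz : Function.Injective z) :
    ∃ Γ : Fin N → ℂ, Γ ≠ 0 ∧
      ∀ α, ∑ β ∈ Finset.univ.erase α, Γ β / (z α - z β) = 0 := by
  obtain ⟨Γ, hΓ, hmul⟩ := (Matrix.exists_mulVec_eq_zero_iff).2 (configMatrix_det_zero hN z)
  refine ⟨Γ, hΓ, fun α => ?_⟩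
  have h := congrFun hmul α
  simp only [mulVec, dotProduct, configMatrix, of_apply, Pi.zero_apply] at h
  rw [← h, ← Finset.sum_erase_add _ _ (Finset.mem_univ α), if_pos rfl, zero_mul, add_zero]
  refine Finset.sum_congr rfl fun β hβ => ?_
  rw [if_neg (Finset.ne_of_mem_erase hβ).symm]
  ring
end

section
/- For any three distinct points z₁, z₂, z₃ ∈ ℂ, the characteristic polynomial of the 3×3 configuration matrix A is X³ + s·X, where s = 1/(z₁−z₂)² + 1/(z₂−z₃)² + 1/(z₁−z₃)². Consequently the eigenvalues of A are 0 and the pair ±λ with λ² = −s, and s is invariant under cyclic permutations of the indices. -/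
open Matrix BigOperators Polynomial

lemma aux_charpoly (a b c : ℂ) :
    (Matrix.of ![![0,a,c],![-a,0,b],![-c,-b,0]]).charpoly
      = X ^ 3 + C (a^2 + b^2 + c^2) * X := by
  rw [Matrix.charpoly, Matrix.det_fin_three]
  simp [Matrix.charmatrix_apply, Matrix.one_apply]
  ring

lemma aux_det (a b c μ : ℂ) :
    (Matrix.of ![![0,a,c],![-a,0,b],![-c,-b,0]] - μ • 1).det
      = -(μ * (μ^2 + (a^2 + b^2 + c^2))) := by
  rw [Matrix.det_fin_three]
  simp [Matrix.one_apply]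
  ring

lemma config_eq (z₁ z₂ z₃ : ℂ) :
    configMatrix ![z₁, z₂, z₃] =
      Matrix.of ![![0, 1/(z₁-z₂), 1/(z₁-z₃)],
                  ![-(1/(z₁-z₂)), 0, 1/(z₂-z₃)],
                  ![-(1/(z₁-z₃)), -(1/(z₂-z₃)), 0]] := by
  ext i j
  fin_cases i <;> fin_cases j <;>
    simp [configMatrix, one_div, ← inv_neg, neg_sub]

/-- For three distinct points the characteristic polynomial of the configuration
matrix is `X³ + s·X` with `s = 1/(z₁−z₂)² + 1/(z₂−z₃)² + 1/(z₁−z₃)²`; hence the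
eigenvalues are `0` and the pair `±λ` with `λ² = −s`, and `s` is invariant
under cyclic permutation of the indices. -/
theorem charpoly_configMatrix_three
    (z₁ z₂ z₃ : ℂ) (h12 : z₁ ≠ z₂) (h23 : z₂ ≠ z₃) (h13 : z₁ ≠ z₃) :
    (configMatrix ![z₁, z₂, z₃]).charpoly =
        X ^ 3 + C (1 / (z₁ - z₂) ^ 2 + 1 / (z₂ - z₃) ^ 2 + 1 / (z₁ - z₃) ^ 2) * X ∧
    (∀ μ : ℂ, (∃ v : Fin 3 → ℂ, v ≠ 0 ∧ (configMatrix ![z₁, z₂, z₃]).mulVec v = μ • v) ↔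
        (μ = 0 ∨ μ ^ 2 = -(1 / (z₁ - z₂) ^ 2 + 1 / (z₂ - z₃) ^ 2 + 1 / (z₁ - z₃) ^ 2))) ∧
    (1 / (z₁ - z₂) ^ 2 + 1 / (z₂ - z₃) ^ 2 + 1 / (z₁ - z₃) ^ 2 =
        1 / (z₂ - z₃) ^ 2 + 1 / (z₃ - z₁) ^ 2 + 1 / (z₂ - z₁) ^ 2) := by
  have hs : 1 / (z₁ - z₂) ^ 2 + 1 / (z₂ - z₃) ^ 2 + 1 / (z₁ - z₃) ^ 2
      = (1/(z₁-z₂))^2 + (1/(z₂-z₃))^2 + (1/(z₁-z₃))^2 := by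
    simp [div_pow]
  refine ⟨?_, ?_, ?_⟩
  · rw [config_eq, aux_charpoly, hs]
  · intro μ
    rw [config_eq]
    constructor
    · rintro ⟨v, hv, hAv⟩
      have h0 : (Matrix.of ![![0, 1/(z₁-z₂), 1/(z₁-z₃)],
                  ![-(1/(z₁-z₂)), 0, 1/(z₂-z₃)],
                  ![-(1/(z₁-z₃)), -(1/(z₂-z₃)), 0]] - μ • 1).mulVec v = 0 := by
        rw [Matrix.sub_mulVec, hAv, Matrix.smul_mulVec, Matrix.one_mulVec, sub_self]
      have hdet := (Matrix.exists_mulVec_eq_zero_iff).mp ⟨v, hv, h0⟩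
      rw [aux_det] at hdet
      rcases mul_eq_zero.mp (neg_eq_zero.mp hdet) with h | h
      · exact Or.inl h
      · right
        rw [hs]
        linear_combination h
    · intro h
      have hdet : (Matrix.of ![![0, 1/(z₁-z₂), 1/(z₁-z₃)],
                  ![-(1/(z₁-z₂)), 0, 1/(z₂-z₃)],
                  ![-(1/(z₁-z₃)), -(1/(z₂-z₃)), 0]] - μ • 1).det = 0 := by
        rw [aux_det]
        rcases h with h | h
        · simp [h]
        · rw [hs] at h; rw [h]; ring
      obtain ⟨v, hv, h0⟩ := (Matrix.exists_mulVec_eq_zero_iff).mpr hdet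
      refine ⟨v, hv, ?_⟩
      rw [Matrix.sub_mulVec, Matrix.smul_mulVec, Matrix.one_mulVec, sub_eq_zero] at h0
      exact h0
  · have h1 : (z₃ - z₁)^2 = (z₁ - z₃)^2 := by ring
    have h2 : (z₂ - z₁)^2 = (z₁ - z₂)^2 := by ring
    rw [h1, h2]; ring
end

section
/- For any three distinct points z₁, z₂, z₃ ∈ ℂ, the vector Γ ∈ ℂ³ with components Γ_α = ∏_{β≠α} (z_α − z_β) is nonzero and lies in the kernel of the configuration matrix A, i.e. Γ is a strength vector making the three points a fixed equilibrium: ∑_{β≠α} Γ_β/(z_α − z_β) = 0 for α = 1, 2, 3. -/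
open Matrix BigOperators Polynomial

/-- For any three distinct points, `Γ α = ∏_{β ≠ α} (z α - z β)` is a nonzero
vector in the kernel of the configuration matrix, i.e. a strength vector making
the three points a fixed equilibrium. -/
theorem prod_strength_vector_in_kernel_three
    (z : Fin 3 → ℂ) (hz : Function.Injective z)
    (Γ : Fin 3 → ℂ) (hΓ : ∀ α, Γ α = ∏ β ∈ Finset.univ.erase α, (z α - z β)) :
    Γ ≠ 0 ∧ ∀ α, ∑ β ∈ Finset.univ.erase α, Γ β / (z α - z β) = 0 := by
  have h01 : z 0 - z 1 ≠ 0 := sub_ne_zero_of_ne (hz.ne (by decide))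
  have h02 : z 0 - z 2 ≠ 0 := sub_ne_zero_of_ne (hz.ne (by decide))
  have h12 : z 1 - z 2 ≠ 0 := sub_ne_zero_of_ne (hz.ne (by decide))
  have h10 : z 1 - z 0 ≠ 0 := sub_ne_zero_of_ne (hz.ne (by decide))
  have h20 : z 2 - z 0 ≠ 0 := sub_ne_zero_of_ne (hz.ne (by decide))
  have h21 : z 2 - z 1 ≠ 0 := sub_ne_zero_of_ne (hz.ne (by decide))
  have e0 : (Finset.univ.erase (0 : Fin 3)) = {1, 2} := by decide
  have e1 : (Finset.univ.erase (1 : Fin 3)) = {0, 2} := by decide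
  have e2 : (Finset.univ.erase (2 : Fin 3)) = {0, 1} := by decide
  have g0 : Γ 0 = (z 0 - z 1) * (z 0 - z 2) := by
    rw [hΓ, e0, Finset.prod_pair (by decide : (1 : Fin 3) ≠ 2)]
  have g1 : Γ 1 = (z 1 - z 0) * (z 1 - z 2) := by
    rw [hΓ, e1, Finset.prod_pair (by decide : (0 : Fin 3) ≠ 2)]
  have g2 : Γ 2 = (z 2 - z 0) * (z 2 - z 1) := by
    rw [hΓ, e2, Finset.prod_pair (by decide : (0 : Fin 3) ≠ 1)]
  constructor
  · intro h
    rw [h] at g0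
    exact mul_ne_zero h01 h02 g0.symm
  · intro α
    fin_cases α
    · show ∑ β ∈ Finset.univ.erase (0 : Fin 3), Γ β / (z 0 - z β) = 0
      rw [e0, Finset.sum_pair (by decide : (1 : Fin 3) ≠ 2), g1, g2]
      field_simp
      ring
    · show ∑ β ∈ Finset.univ.erase (1 : Fin 3), Γ β / (z 1 - z β) = 0
      rw [e1, Finset.sum_pair (by decide : (0 : Fin 3) ≠ 2), g0, g2]
      field_simp
      ring
    · show ∑ β ∈ Finset.univ.erase (2 : Fin 3), Γ β / (z 2 - z β) = 0
      rw [e2, Finset.sum_pair (by decide : (0 : Fin 3) ≠ 1), g0, g1]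
      field_simp
      ring
end

section
/- Let z ∈ ℂ with z ≠ 0, z ≠ 1 and 1 − z + z² ≠ 0, and let A be the configuration matrix of the three points z₁ = 0, z₂ = 1, z₃ = z. Then the kernel of A is one-dimensional and is spanned by the vector (1/(z−1), −1/z, 1): every Γ ∈ ℂ³ with A·Γ = 0 is a complex scalar multiple of (1/(z−1), −1/z, 1). -/
open Matrix BigOperators Polynomial

/-- For the points `0, 1, z` (with `z ≠ 0, 1` and `1 - z + z² ≠ 0`), the kernel
of the configuration matrix is one-dimensional, spanned by `(1/(z−1), −1/z, 1)`. -/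
theorem kernel_configMatrix_zero_one_z
    (z : ℂ) (h0 : z ≠ 0) (h1 : z ≠ 1) (hq : 1 - z + z ^ 2 ≠ 0) :
    Module.finrank ℂ (LinearMap.ker (configMatrix ![0, 1, z]).mulVecLin) = 1 ∧
    (configMatrix ![0, 1, z]).mulVec ![1 / (z - 1), -(1 / z), 1] = 0 ∧
    ∀ Γ : Fin 3 → ℂ, (configMatrix ![0, 1, z]).mulVec Γ = 0 →
      ∃ c : ℂ, Γ = c • ![1 / (z - 1), -(1 / z), 1] := by
  have hz1 : z - 1 ≠ 0 := sub_ne_zero.mpr h1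
  have h1z : (1:ℂ) - z ≠ 0 := sub_ne_zero.mpr (Ne.symm h1)
  have hmem : (configMatrix ![0, 1, z]).mulVec ![1 / (z - 1), -(1 / z), 1] = 0 := by
    funext i
    fin_cases i <;>
      simp [configMatrix, Matrix.mulVec, dotProduct, Fin.sum_univ_three] <;>
      field_simp [h0, hz1, h1z] <;> ring
  have hspan : ∀ Γ : Fin 3 → ℂ, (configMatrix ![0, 1, z]).mulVec Γ = 0 →
      ∃ c : ℂ, Γ = c • ![1 / (z - 1), -(1 / z), 1] := by
    intro Γ hΓ
    have e0 := congr_fun hΓ 0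
    have e1 := congr_fun hΓ 1
    simp [configMatrix, Matrix.mulVec, dotProduct, Fin.sum_univ_three] at e0 e1
    refine ⟨Γ 2, ?_⟩
    funext i
    fin_cases i <;> simp
    · field_simp [h0, hz1, h1z] at e1 ⊢
      linear_combination -e1
    · field_simp [h0, hz1, h1z] at e0 ⊢
      linear_combination -e0
  refine ⟨?_, hmem, hspan⟩
  have hker : LinearMap.ker (configMatrix ![0, 1, z]).mulVecLin
      = Submodule.span ℂ {![1 / (z - 1), -(1 / z), 1]} := by
    apply le_antisymm
    · intro Γ hΓ
      obtain ⟨c, hc⟩ := hspan Γ (by simpa using hΓ)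
      rw [hc]
      exact Submodule.smul_mem _ _ (Submodule.mem_span_singleton_self _)
    · rw [Submodule.span_singleton_le_iff_mem]
      simpa [LinearMap.mem_ker] using hmem
  rw [hker]
  apply finrank_span_singleton
  intro h
  have := congr_fun h 2
  simp at this
end

section
/- For three point vortices or three sources/sinks, the only fixed equilibria are collinear: let z₁, z₂, z₃ ∈ ℂ be distinct and let Γ ∈ ℂ³ be a nonzero strength vector with A·Γ = 0 whose components are either all real (point vortices) or all purely imaginary (sources/sinks). Then z₁, z₂, z₃ lie on a common line, i.e. (z₃ − z₁)/(z₂ − z₁) ∈ ℝ. -/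
open Matrix BigOperators Polynomial

/-- For three point vortices (all strengths real) or three sources/sinks (all
strengths purely imaginary), the only fixed equilibria are collinear. -/
theorem three_equilibrium_real_or_imaginary_strengths_collinear
    (z₁ z₂ z₃ : ℂ) (h12 : z₁ ≠ z₂) (h23 : z₂ ≠ z₃) (h13 : z₁ ≠ z₃)
    (Γ : Fin 3 → ℂ) (hΓ : Γ ≠ 0)
    (heq : (configMatrix ![z₁, z₂, z₃]).mulVec Γ = 0)
    (hri : (∀ α, (Γ α).im = 0) ∨ (∀ α, (Γ α).re = 0)) :
    ((z₃ - z₁) / (z₂ - z₁)).im = 0 := by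
  have d12 : z₁ - z₂ ≠ 0 := sub_ne_zero.mpr h12
  have d13 : z₁ - z₃ ≠ 0 := sub_ne_zero.mpr h13
  have d23 : z₂ - z₃ ≠ 0 := sub_ne_zero.mpr h23
  have d21 : z₂ - z₁ ≠ 0 := sub_ne_zero.mpr (Ne.symm h12)
  have d31 : z₃ - z₁ ≠ 0 := sub_ne_zero.mpr (Ne.symm h13)
  have d32 : z₃ - z₂ ≠ 0 := sub_ne_zero.mpr (Ne.symm h23)
  have e0 : 1/(z₁-z₂) * Γ 1 + 1/(z₁-z₃) * Γ 2 = 0 := by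
    have := congrFun heq 0
    simpa [configMatrix, Matrix.mulVec, dotProduct, Fin.sum_univ_three,
      Fin.ext_iff] using this
  have e2 : 1/(z₃-z₁) * Γ 0 + 1/(z₃-z₂) * Γ 1 = 0 := by
    have := congrFun heq 2
    simpa [configMatrix, Matrix.mulVec, dotProduct, Fin.sum_univ_three,
      Fin.ext_iff] using this
  -- Γ 1 ≠ 0
  have hΓ1 : Γ 1 ≠ 0 := by
    intro h1
    have h2 : Γ 2 = 0 := by
      simp [h1, d13, h13] at e0; exact e0
    have h0 : Γ 0 = 0 := by
      simp [h1, d31, h13.symm] at e2; exact e2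
    apply hΓ
    funext i
    fin_cases i <;> simp [h0, h1, h2]
  -- express the ratio
  have key : (z₃ - z₁) / (z₂ - z₁) = -(Γ 2 / Γ 1) := by
    have h : Γ 1 * (z₃ - z₁) = -(Γ 2 * (z₂ - z₁)) := by
      field_simp at e0
      linear_combination -e0
    field_simp
    linear_combination h
  rw [key]
  rcases hri with h | h
  · simp [Complex.div_im, h 1, h 2]
  · simp [Complex.div_im, h 1, h 2]
end

section
/- Let x₁ < x₂ < x₃ be real numbers and let A be the configuration matrix of the collinear points z₁ = x₁, z₂ = x₂, z₃ = x₃. Then the kernel of A is one-dimensional and is spanned by the real vector Γ = (1, −(x₃−x₂)/(x₃−x₁), (x₃−x₂)/(x₂−x₁)); in particular A·Γ = 0, so this Γ makes the collinear configuration a fixed equilibrium of point vortices. -/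
open Matrix BigOperators Polynomial

/-- For three collinear points `x₁ < x₂ < x₃` on the real axis, the kernel of
the configuration matrix is one-dimensional and spanned by the real vector
`(1, −(x₃−x₂)/(x₃−x₁), (x₃−x₂)/(x₂−x₁))`, which is an equilibrium strength
vector of point vortices. -/
theorem collinear_three_kernel
    (x₁ x₂ x₃ : ℝ) (h12 : x₁ < x₂) (h23 : x₂ < x₃) :
    (configMatrix ![(x₁ : ℂ), (x₂ : ℂ), (x₃ : ℂ)]).mulVec
        ![1, -(((x₃ : ℂ) - x₂) / ((x₃ : ℂ) - x₁)), ((x₃ : ℂ) - x₂) / ((x₂ : ℂ) - x₁)] = 0 ∧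
    Module.finrank ℂ
        (LinearMap.ker (configMatrix ![(x₁ : ℂ), (x₂ : ℂ), (x₃ : ℂ)]).mulVecLin) = 1 ∧
    ∀ Γ : Fin 3 → ℂ, (configMatrix ![(x₁ : ℂ), (x₂ : ℂ), (x₃ : ℂ)]).mulVec Γ = 0 →
      ∃ c : ℂ, Γ = c •
        ![1, -(((x₃ : ℂ) - x₂) / ((x₃ : ℂ) - x₁)), ((x₃ : ℂ) - x₂) / ((x₂ : ℂ) - x₁)] := by
  have h13 : x₁ < x₃ := h12.trans h23
  have ha : (x₂ : ℂ) - x₁ ≠ 0 := sub_ne_zero.mpr (by exact_mod_cast h12.ne')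
  have hb : (x₃ : ℂ) - x₂ ≠ 0 := sub_ne_zero.mpr (by exact_mod_cast h23.ne')
  have hc : (x₃ : ℂ) - x₁ ≠ 0 := sub_ne_zero.mpr (by exact_mod_cast h13.ne')
  have ha' : (x₁ : ℂ) - x₂ ≠ 0 := sub_ne_zero.mpr (by exact_mod_cast h12.ne)
  have hb' : (x₂ : ℂ) - x₃ ≠ 0 := sub_ne_zero.mpr (by exact_mod_cast h23.ne)
  have hc' : (x₁ : ℂ) - x₃ ≠ 0 := sub_ne_zero.mpr (by exact_mod_cast h13.ne)
  set v : Fin 3 → ℂ :=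
    ![1, -(((x₃ : ℂ) - x₂) / ((x₃ : ℂ) - x₁)), ((x₃ : ℂ) - x₂) / ((x₂ : ℂ) - x₁)] with hv
  have hAv : (configMatrix ![(x₁ : ℂ), (x₂ : ℂ), (x₃ : ℂ)]).mulVec v = 0 := by
    funext i
    fin_cases i <;>
      simp [configMatrix, mulVec, dotProduct, Fin.sum_univ_three, hv, Fin.ext_iff] <;>
      field_simp <;> ring
  have hker : ∀ Γ : Fin 3 → ℂ,
      (configMatrix ![(x₁ : ℂ), (x₂ : ℂ), (x₃ : ℂ)]).mulVec Γ = 0 → Γ = Γ 0 • v := by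
    intro Γ hΓ
    have e1 := congrFun hΓ 1
    have e2 := congrFun hΓ 2
    simp [configMatrix, mulVec, dotProduct, Fin.sum_univ_three, Fin.ext_iff] at e1 e2
    funext i
    fin_cases i
    · simp [hv]
    · -- Γ 1 = -Γ 0 * (x₃-x₂)/(x₃-x₁), from row 2
      simp only [hv, Pi.smul_apply, smul_eq_mul]
      show Γ 1 = Γ 0 * -(((x₃ : ℂ) - x₂) / ((x₃ : ℂ) - x₁))
      field_simp at e2
      have h1 : Γ 1 = -(Γ 0 * ((x₃ : ℂ) - x₂)) / ((x₃ : ℂ) - x₁) := by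
        rw [eq_div_iff hc]; linear_combination e2
      rw [h1]; ring
    · simp only [hv, Pi.smul_apply, smul_eq_mul]
      show Γ 2 = Γ 0 * (((x₃ : ℂ) - x₂) / ((x₂ : ℂ) - x₁))
      field_simp at e1
      have h2 : Γ 2 = Γ 0 * ((x₃ : ℂ) - x₂) / ((x₂ : ℂ) - x₁) := by
        rw [eq_div_iff ha]; linear_combination e1
      rw [h2]; ring
  refine ⟨hAv, ?_, fun Γ h => ⟨Γ 0, hker Γ h⟩⟩
  have hv0 : v ≠ 0 := by
    intro h
    have := congrFun h 0
    simp [hv] at this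
  have hspan : LinearMap.ker (configMatrix ![(x₁ : ℂ), (x₂ : ℂ), (x₃ : ℂ)]).mulVecLin
      = Submodule.span ℂ {v} := by
    apply le_antisymm
    · intro Γ hΓ
      rw [LinearMap.mem_ker, Matrix.mulVecLin_apply] at hΓ
      rw [hker Γ hΓ]
      exact Submodule.smul_mem _ _ (Submodule.mem_span_singleton_self v)
    · rw [Submodule.span_singleton_le_iff_mem, LinearMap.mem_ker, Matrix.mulVecLin_apply]
      exact hAv
  rw [hspan, finrank_span_singleton hv0]
end
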